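/- Let M be a monad on a cocomplete category C whose underlying endofunctor preserves coequalizers of reflexive pairs. Then the Eilenberg–Moore category Alg(M) of M-algebras is cocomplete (has all small colimits). -/

import Mathlib

open CategoryTheory CategoryTheory.Limits

universe v u

variable {C : Type u} [Category.{v} C]

section Aux

universe v₁ v₂ u₁ u₂

/-- A natural transformation between functors is a regular epi if it admits a
"natural" coequalizer presentation which is a coequalizer pointwise. -/
def regularEpiOfEval {J : Type u₁} [Category.{v₁} J] {D : Type u₂} [Category.{v₂} D]
    {X Y : J ⥤ D} (f : X ⟶ Y) (W : J ⥤ D) (l r : W ⟶ X) (w : l ≫ f = r ≫ f)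
    (h : ∀ j : J, IsColimit (Cofork.ofπ (f.app j)
        (by rw [← NatTrans.comp_app, ← NatTrans.comp_app, w]) :
          Cofork (l.app j) (r.app j))) :
    RegularEpi f where
  W := W
  left := l
  right := r
  w := w
  isColimit := evaluationJointlyReflectsColimits _ fun j =>
    (isColimitMapCoconeCoforkEquiv ((evaluation J D).obj j) w).symm (h j)

end Aux

section MonadAux

variable (M : Monad C)

/-- The natural transformation with components the "top maps" of the Beck presentation. -/
@[simps]
def beckTop : (Monad.forget M ⋙ Monad.free M ⋙ Monad.forget M ⋙ Monad.free M :
      M.Algebra ⥤ M.Algebra) ⟶ (Monad.forget M ⋙ Monad.free M) where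
  app A := Monad.FreeCoequalizer.topMap A
  naturality A B h := by
    ext
    show (M : C ⥤ C).map ((M : C ⥤ C).map h.f) ≫ (M : C ⥤ C).map B.a =
      (M : C ⥤ C).map A.a ≫ (M : C ⥤ C).map h.f
    rw [← Functor.map_comp, ← Functor.map_comp]
    exact congrArg (M : C ⥤ C).map h.h

/-- The natural transformation with components the "bottom maps" of the Beck presentation. -/
@[simps]
def beckBottom : (Monad.forget M ⋙ Monad.free M ⋙ Monad.forget M ⋙ Monad.free M :
      M.Algebra ⥤ M.Algebra) ⟶ (Monad.forget M ⋙ Monad.free M) where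
  app A := Monad.FreeCoequalizer.bottomMap A
  naturality A B h := by
    ext
    dsimp [Monad.FreeCoequalizer.bottomMap]
    exact M.μ.naturality h.f

/-- The natural transformation with components the Beck cofork maps. -/
@[simps]
def beckPi : (Monad.forget M ⋙ Monad.free M : M.Algebra ⥤ M.Algebra) ⟶ 𝟭 M.Algebra where
  app A := Monad.FreeCoequalizer.π A
  naturality A B h := by
    ext
    dsimp [Monad.FreeCoequalizer.π]
    exact h.h

/-- The Eilenberg-Moore category has coequalizers of reflexive pairs when the monad
preserves them. -/
lemma algebra_hasReflexiveCoequalizers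
    (hM : ∀ ⦃A B : C⦄ (f g : A ⟶ B), IsReflexivePair f g →
      PreservesColimit (parallelPair f g) (M : C ⥤ C)) [HasColimits C] :
    HasReflexiveCoequalizers M.Algebra := by
  constructor
  intro X Y f g hfg
  obtain ⟨s, hsf, hsg⟩ := hfg.common_section'
  have hsf' : s.f ≫ f.f = 𝟙 Y.A := congrArg Monad.Algebra.Hom.f hsf
  have hsg' : s.f ≫ g.f = 𝟙 Y.A := congrArg Monad.Algebra.Hom.f hsg
  haveI := hM ((parallelPair f g ⋙ Monad.forget M).map WalkingParallelPairHom.left)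
    ((parallelPair f g ⋙ Monad.forget M).map WalkingParallelPairHom.right)
    (IsReflexivePair.mk' s.f (by exact hsf') (by exact hsg'))
  have m1 : (M : C ⥤ C).map s.f ≫ (M : C ⥤ C).map f.f = 𝟙 ((M : C ⥤ C).obj Y.A) := by
    rw [← Functor.map_comp, hsf']
    exact M.toFunctor.map_id Y.A
  have m2 : (M : C ⥤ C).map s.f ≫ (M : C ⥤ C).map g.f = 𝟙 ((M : C ⥤ C).obj Y.A) := by
    rw [← Functor.map_comp, hsg']
    exact M.toFunctor.map_id Y.A
  haveI := hM (((parallelPair f g ⋙ Monad.forget M) ⋙ (M : C ⥤ C)).map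
      WalkingParallelPairHom.left)
    (((parallelPair f g ⋙ Monad.forget M) ⋙ (M : C ⥤ C)).map WalkingParallelPairHom.right)
    (IsReflexivePair.mk' ((M : C ⥤ C).map s.f) m1 m2)
  haveI : PreservesColimit (parallelPair f g ⋙ Monad.forget M) (M : C ⥤ C) :=
    preservesColimit_of_iso_diagram (M : C ⥤ C)
      (diagramIsoParallelPair (parallelPair f g ⋙ Monad.forget M)).symm
  haveI : PreservesColimit ((parallelPair f g ⋙ Monad.forget M) ⋙ (M : C ⥤ C))
      (M : C ⥤ C) :=
    preservesColimit_of_iso_diagram (M : C ⥤ C)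
      (diagramIsoParallelPair ((parallelPair f g ⋙ Monad.forget M) ⋙ (M : C ⥤ C))).symm
  exact hasColimit_of_created (parallelPair f g) (Monad.forget M)

end MonadAux

/-- if `C` is cocomplete and the monad `M` preserves coequalizers of
reflexive pairs, then the Eilenberg-Moore category of `M`-algebras is cocomplete. -/
theorem algebra_hasColimits (M : Monad C) [HasColimits C]
    (hM : ∀ ⦃A B : C⦄ (f g : A ⟶ B), IsReflexivePair f g →
      PreservesColimit (parallelPair f g) (M : C ⥤ C)) :
    HasColimits M.Algebra := by
  haveI : HasReflexiveCoequalizers M.Algebra := algebra_hasReflexiveCoequalizers M hM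
  constructor
  intro J hJ
  rw [hasColimitsOfShape_iff_isRightAdjoint_const]
  -- the whiskered free/forget adjunction
  let adj' := (Monad.adj M).whiskerRight J
  -- its counit is pointwise a Beck coequalizer, hence a regular epimorphism
  haveI : ∀ X : J ⥤ M.Algebra, RegularEpi (adj'.counit.app X) := by
    intro X
    have hε : adj'.counit.app X = Functor.whiskerLeft X (beckPi M) := by
      ext j
      simp [adj', Monad.adj, beckPi, Monad.FreeCoequalizer.π]
      exact Category.id_comp _
    rw [hε]
    have w : Functor.whiskerLeft X (beckTop M) ≫ Functor.whiskerLeft X (beckPi M) =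
        Functor.whiskerLeft X (beckBottom M) ≫ Functor.whiskerLeft X (beckPi M) := by
      ext j
      exact congrArg Monad.Algebra.Hom.f (Monad.FreeCoequalizer.condition (X.obj j))
    exact regularEpiOfEval _ _ _ _ w fun j => Monad.beckAlgebraCoequalizer (X.obj j)
  -- `const ⋙ whiskered-forget` has a left adjoint since `C` is cocomplete
  haveI : (Functor.const J ⋙
      (Functor.whiskeringRight J M.Algebra C).obj (Monad.forget M)).IsRightAdjoint :=
    ((colimConstAdj.comp (Monad.adj M)).ofNatIsoRight
      (NatIso.ofComponents (fun A => (Functor.constComp J _ (Monad.forget M)).symm)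
        (by intro X Y f; ext j; simp [Functor.constComp]; exact (Category.id_comp _).symm) : Monad.forget M ⋙ Functor.const J ≅
          Functor.const J ⋙ (Functor.whiskeringRight J M.Algebra C).obj (Monad.forget M))).isRightAdjoint
  exact isRightAdjoint_triangle_lift (Functor.const J) adj' ‹∀ X : J ⥤ M.Algebra, RegularEpi (adj'.counit.app X)›
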